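/- Let G be a connected finite simple graph, T a subtree of G with at most t leaves (t ≥ 2), and S ⊆ V(G) with S − V(T) nonempty. Suppose P₀ is a path in G from some vertex s₀ ∈ S − V(T) to T, internally disjoint from T, chosen of maximum length among all paths from vertices lying in some maximum independent subset of S − V(T) to T. Then P₀ intersects every maximum independent subset of S − V(T), and hence the tree T' = T + P₀ satisfies α_G(S − V(T')) ≤ α_G(S − V(T)) − 1 and T' has at most t + 1 leaves. -/

import Mathlib

open SimpleGraph Set

variable {V : Type*}

/-- The independence number of `S` in `G`: the maximum cardinality of a subset of `S`
that is independent in `G`. -/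
noncomputable def indepNumOn (G : SimpleGraph V) (S : Set V) : ℕ :=
  sSup {n | ∃ I : Set V, I ⊆ S ∧ I.Pairwise (fun a b => ¬ G.Adj a b) ∧ I.ncard = n}

/-- `I` is a maximum independent subset of `S` in `G`. -/
def MaxIndepOn (G : SimpleGraph V) (S : Set V) (I : Set V) : Prop :=
  I ⊆ S ∧ I.Pairwise (fun a b => ¬ G.Adj a b) ∧ I.ncard = indepNumOn G S

/-- Two `x`–`y` walks are internally disjoint if they share only `x` and `y`. -/
def InternallyDisjoint (G : SimpleGraph V) {x y : V} (p q : G.Walk x y) : Prop :=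
  ∀ v, v ∈ p.support → v ∈ q.support → v = x ∨ v = y

/-- Local connectivity `κ_G(x,y)`: maximum number of pairwise internally disjoint
`x`–`y` paths in `G`. -/
noncomputable def localConn (G : SimpleGraph V) (x y : V) : ℕ :=
  sSup {n | ∃ P : Set (G.Path x y),
    P.Pairwise (fun p q => InternallyDisjoint G p.1 q.1) ∧ P.ncard = n}

/-- `κ_G(S)`: the minimum of local connectivities over distinct pairs in `S`,
`+∞` if `S` has at most one element. -/
noncomputable def setConn (G : SimpleGraph V) (S : Set V) : ℕ∞ :=
  ⨅ x ∈ S, ⨅ y ∈ S, ⨅ _ : x ≠ y, (localConn G x y : ℕ∞)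

/-- Vertex connectivity `κ(G)`: the maximum `k` such that `G` has more than `k`
vertices and removing fewer than `k` vertices always leaves a connected graph. -/
noncomputable def vertexConn (G : SimpleGraph V) [Fintype V] : ℕ :=
  sSup {k | k < Fintype.card V ∧ ∀ X : Finset V, X.card < k →
    (G.induce ((↑X : Set V)ᶜ)).Connected}

/-- The set of leaves (vertices of degree one) of a subgraph. -/
def subLeaves {G : SimpleGraph V} (T : G.Subgraph) : Set V :=
  {v | v ∈ T.verts ∧ (T.neighborSet v).ncard = 1}

/-- The set of branch vertices (vertices of degree at least three) of a subgraph. -/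
def subBranches {G : SimpleGraph V} (T : G.Subgraph) : Set V :=
  {v | v ∈ T.verts ∧ 3 ≤ (T.neighborSet v).ncard}

namespace StmtAux

variable {G : SimpleGraph V}

/-- Lift a `G`-walk with all edges in `H` to a walk in `H.coe`. -/
def liftWalk {H : G.Subgraph} : ∀ {u v : V} (c : G.Walk u v),
    (∀ e ∈ c.edges, e ∈ H.edgeSet) → ∀ (hu : u ∈ H.verts) (hv : v ∈ H.verts),
    H.coe.Walk ⟨u, hu⟩ ⟨v, hv⟩
  | _, _, Walk.nil, _, _, _ => Walk.nil
  | _, _, Walk.cons _ q, hc, hu, hv =>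
    have ha : H.Adj _ _ := Subgraph.mem_edgeSet.mp (hc _ (List.mem_cons_self))
    Walk.cons (show H.coe.Adj ⟨_, hu⟩ ⟨_, ha.snd_mem⟩ from ha)
      (liftWalk q (fun e he => hc e (List.mem_cons_of_mem _ he)) ha.snd_mem hv)

lemma liftWalk_map {H : G.Subgraph} {u v : V} (c : G.Walk u v) :
    ∀ (hc : ∀ e ∈ c.edges, e ∈ H.edgeSet) (hu : u ∈ H.verts) (hv : v ∈ H.verts),
    (liftWalk c hc hu hv).map H.hom = c := by
  induction c with
  | nil => intro _ _ _; rfl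
  | cons h q ih =>
    intro hc hu hv
    simp only [liftWalk, Walk.map_cons]
    rw [ih]
    rfl

lemma nocyc_of_acyclic {H : G.Subgraph} (hH : H.coe.IsAcyclic) :
    ∀ (v : V) (c : G.Walk v v), c.IsCycle → ¬ (∀ e ∈ c.edges, e ∈ H.edgeSet) := by
  intro v c hc he
  have hv : v ∈ H.verts := by
    cases c with
    | nil => exact absurd rfl hc.ne_nil
    | cons h q => exact (Subgraph.mem_edgeSet.mp (he _ (List.mem_cons_self))).fst_mem
  have hcyc : ((liftWalk c he hv hv).map H.hom).IsCycle := by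
    rw [liftWalk_map]; exact hc
  exact hH _ ((Walk.map_isCycle_iff_of_injective Subtype.val_injective).mp hcyc)

lemma acyclic_of_nocyc (H : G.Subgraph)
    (h : ∀ (v : V) (c : G.Walk v v), c.IsCycle → ¬ (∀ e ∈ c.edges, e ∈ H.edgeSet)) :
    H.coe.IsAcyclic := by
  intro v c hc
  refine h v (c.map H.hom) (hc.map Subtype.val_injective) ?_
  intro e he
  replace he : e ∈ c.edges.map (Sym2.map H.hom) := by rw [← Walk.edges_map]; exact he
  obtain ⟨e', he', rfl⟩ := List.mem_map.mp he
  induction e' using Sym2.ind with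
  | _ a b =>
    have : H.coe.Adj a b := Walk.adj_of_mem_edges c he'
    exact Subgraph.mem_edgeSet.mpr this

lemma exists_edge_of_mem_support_ne_start {x y w : V} (d : G.Walk x y) :
    w ∈ d.support → w ≠ x → ∃ e ∈ d.edges, w ∈ e := by
  induction d with
  | nil => intro hw hwx; simp at hw; exact absurd hw hwx
  | @cons a b c h q ih =>
    intro hw hwx
    rw [Walk.support_cons, List.mem_cons] at hw
    rcases hw with rfl | hw
    · exact absurd rfl hwx
    by_cases hwb : w = b
    · exact ⟨s(a, b), List.mem_cons_self, by simp [hwb]⟩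
    · obtain ⟨e, he, hwe⟩ := ih hw hwb
      exact ⟨e, List.mem_cons_of_mem _ he, hwe⟩

lemma nocyc_pendant {K : G.Subgraph}
    (hK : ∀ (v : V) (c : G.Walk v v), c.IsCycle → ¬ (∀ e ∈ c.edges, e ∈ K.edgeSet))
    {s b : V} (h : G.Adj s b) (hs : s ∉ K.verts) :
    ∀ (v : V) (c : G.Walk v v), c.IsCycle →
      ¬ (∀ e ∈ c.edges, e ∈ (K ⊔ G.subgraphOfAdj h).edgeSet) := by
  classical
  intro v c hc he
  have hKs : ∀ e ∈ K.edgeSet, s ∉ e := by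
    intro e heK hse
    induction e using Sym2.ind with
    | _ a b' =>
      rw [Subgraph.mem_edgeSet] at heK
      rcases Sym2.mem_iff.mp hse with rfl | rfl
      exacts [hs heK.fst_mem, hs heK.snd_mem]
  have hmem : ∀ e ∈ c.edges, e ∈ K.edgeSet ∨ e = s(s, b) := by
    intro e hee
    have := he e hee
    rw [Subgraph.edgeSet_sup, Set.mem_union, edgeSet_subgraphOfAdj, Set.mem_singleton_iff] at this
    exact this
  by_cases hsc : s ∈ c.support
  · have hcyc' := hc.rotate hsc
    have hrot := Walk.rotate_edges c s hsc
    have hmem' : ∀ e ∈ (c.rotate s hsc).edges, e ∈ K.edgeSet ∨ e = s(s, b) :=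
      fun e hee => hmem e (hrot.mem_iff.mp hee)
    obtain ⟨x, hadj, d, hd⟩ := Walk.not_nil_iff.mp hcyc'.not_nil
    rw [hd] at hmem' hcyc'
    have he1 : s(s, x) ∈ (Walk.cons hadj d).edges := List.mem_cons_self
    have he1' : s(s, x) = s(s, b) := by
      rcases hmem' _ he1 with h1 | h1
      · exact absurd (Sym2.mem_mk_left _ _) (hKs _ h1)
      · exact h1
    obtain ⟨e, hed, hse⟩ := exists_edge_of_mem_support_ne_start d d.end_mem_support hadj.ne
    have he2 : e = s(s, b) := by
      rcases hmem' e (List.mem_cons_of_mem _ hed) with h1 | h1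
      · exact absurd hse (hKs _ h1)
      · exact h1
    have hnodup := hcyc'.edges_nodup
    rw [Walk.edges_cons] at hnodup
    exact (List.nodup_cons.mp hnodup).1 (he1' ▸ he2 ▸ hed)
  · apply hK v c hc
    intro e hee
    rcases hmem e hee with h1 | h1
    · exact h1
    · exact absurd (Walk.fst_mem_support_of_mem_edges c (h1 ▸ hee)) hsc

lemma nocyc_addPath {H : G.Subgraph}
    (hH : ∀ (v : V) (c : G.Walk v v), c.IsCycle → ¬ (∀ e ∈ c.edges, e ∈ H.edgeSet)) :
    ∀ {s u : V} (p : G.Walk s u), p.IsPath → u ∈ H.verts →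
    (∀ v ∈ p.support, v ∈ H.verts → v = u) →
    ∀ (v : V) (c : G.Walk v v), c.IsCycle →
      ¬ (∀ e ∈ c.edges, e ∈ (H ⊔ p.toSubgraph).edgeSet) := by
  intro s u p
  induction p with
  | nil =>
    intro _ hu _ v c hc he
    apply hH v c hc
    intro e hee
    have := he e hee
    rw [Walk.toSubgraph, Subgraph.edgeSet_sup, Set.mem_union, edgeSet_singletonSubgraph] at this
    rcases this with h1 | h1
    · exact h1
    · exact absurd h1 (Set.notMem_empty e)
  | @cons s w u h q ih =>
    intro hp hu hdisj
    have hK := ih hp.of_cons hu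
      (fun v hv hvT => hdisj v (List.mem_cons_of_mem _ hv) hvT)
    have hsq : s ∉ q.support := by
      have := hp.support_nodup
      rw [Walk.support_cons, List.nodup_cons] at this
      exact this.1
    have hs_not : s ∉ (H ⊔ q.toSubgraph).verts := by
      rw [Subgraph.verts_sup]
      rintro (hsH | hsq')
      · have hsu := hdisj s (Walk.cons h q).start_mem_support hsH
        exact hsq (hsu ▸ q.end_mem_support)
      · exact hsq ((Walk.mem_verts_toSubgraph q).mp hsq')
    have heq : H ⊔ (Walk.cons h q).toSubgraph = (H ⊔ q.toSubgraph) ⊔ G.subgraphOfAdj h := by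
      rw [Walk.toSubgraph, sup_comm (G.subgraphOfAdj h) q.toSubgraph, ← sup_assoc]
    rw [heq]
    exact nocyc_pendant hK h hs_not

lemma endpoint_neighbor {x y : V} (q : G.Walk x y) (hxy : x ≠ y) :
    ∃ z, q.toSubgraph.Adj x z := by
  cases q with
  | nil => exact absurd rfl hxy
  | cons h q' => exact ⟨_, Walk.toSubgraph_adj_getVert (i := 0) (Walk.cons h q') (by simp)⟩

lemma interior_two_neighbors {s u : V} (p : G.Walk s u) :
    p.IsPath → ∀ {v : V}, v ∈ p.support → v ≠ s → v ≠ u →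
    ∃ a b, a ≠ b ∧ p.toSubgraph.Adj v a ∧ p.toSubgraph.Adj v b := by
  induction p with
  | nil =>
    intro _ v hv hvs _
    simp only [Walk.support_nil, List.mem_singleton] at hv
    exact absurd hv hvs
  | @cons s w u h q ih =>
    intro hp v hv hvs hvu
    rw [Walk.support_cons, List.mem_cons] at hv
    rcases hv with rfl | hv
    · exact absurd rfl hvs
    by_cases hw : v = w
    · subst hw
      cases q with
      | nil => exact absurd rfl hvu
      | @cons w x u h' q' =>
        refine ⟨s, x, ?_, ?_, ?_⟩
        · intro hsx
          have := hp.support_nodup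
          rw [Walk.support_cons, List.nodup_cons] at this
          refine this.1 ?_
          rw [hsx]
          exact List.mem_cons_of_mem _ q'.start_mem_support
        · exact Subgraph.sup_adj.mpr (Or.inl (by simp))
        · exact Subgraph.sup_adj.mpr (Or.inr (Subgraph.sup_adj.mpr (Or.inl (by simp))))
    · obtain ⟨a, b, hab, ha, hb⟩ := ih hp.of_cons hv hw hvu
      exact ⟨a, b, hab, Subgraph.sup_adj.mpr (Or.inr ha), Subgraph.sup_adj.mpr (Or.inr hb)⟩

lemma indep_bddAbove [Fintype V] (G : SimpleGraph V) (S : Set V) :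
    BddAbove {n | ∃ I : Set V, I ⊆ S ∧ I.Pairwise (fun a b => ¬ G.Adj a b) ∧ I.ncard = n} := by
  refine ⟨Fintype.card V, ?_⟩
  rintro n ⟨I, -, -, rfl⟩
  simpa [Set.ncard_univ, Nat.card_eq_fintype_card] using
    Set.ncard_le_ncard (Set.subset_univ I) Set.finite_univ

lemma exists_maxIndepOn [Fintype V] (G : SimpleGraph V) (S : Set V) :
    ∃ I, MaxIndepOn G S I := by
  have hne : {n | ∃ I : Set V, I ⊆ S ∧ I.Pairwise (fun a b => ¬ G.Adj a b) ∧
      I.ncard = n}.Nonempty := ⟨0, ∅, Set.empty_subset _, Set.pairwise_empty _, by simp⟩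
  obtain ⟨I, h1, h2, h3⟩ := Nat.sSup_mem hne (indep_bddAbove G S)
  exact ⟨I, h1, h2, h3⟩

end StmtAux

/-- The key induction step: a maximal path `P₀` from a vertex of a maximum independent
subset of `S - V(T)` to `T` meets every maximum independent subset of `S - V(T)`;
hence `T' = T + P₀` is a tree with at most `t + 1` leaves and
`α_G(S - V(T')) ≤ α_G(S - V(T)) - 1`. -/
theorem stmt_15 [Fintype V] (G : SimpleGraph V) (hG : G.Connected)
    (T : G.Subgraph) (hT : T.coe.IsTree) (t : ℕ) (ht : 2 ≤ t)
    (hTl : (subLeaves T).ncard ≤ t)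
    (S : Set V) (hST : (S \ T.verts).Nonempty)
    (s₀ u₀ : V) (p : G.Walk s₀ u₀) (hp : p.IsPath)
    (hu₀ : u₀ ∈ T.verts)
    (hint : ∀ v ∈ p.support, v ∈ T.verts → v = u₀)
    (hs₀ : ∃ I : Set V, MaxIndepOn G (S \ T.verts) I ∧ s₀ ∈ I)
    (hmax : ∀ (s₁ u₁ : V) (q : G.Walk s₁ u₁), q.IsPath → u₁ ∈ T.verts →
      (∀ v ∈ q.support, v ∈ T.verts → v = u₁) →
      (∃ I : Set V, MaxIndepOn G (S \ T.verts) I ∧ s₁ ∈ I) →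
      q.length ≤ p.length) :
    (∀ I : Set V, MaxIndepOn G (S \ T.verts) I → ∃ v ∈ I, v ∈ p.support) ∧
    indepNumOn G (S \ (T ⊔ p.toSubgraph).verts) + 1 ≤ indepNumOn G (S \ T.verts) ∧
    (T ⊔ p.toSubgraph).coe.IsTree ∧
    (subLeaves (T ⊔ p.toSubgraph)).ncard ≤ t + 1 := by
  classical
  obtain ⟨I₀, hI₀, hs₀I₀⟩ := hs₀
  have hs₀S : s₀ ∈ S \ T.verts := hI₀.1 hs₀I₀
  have hs₀T : s₀ ∉ T.verts := hs₀S.2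
  have hs₀u₀ : s₀ ≠ u₀ := fun h => hs₀T (h ▸ hu₀)
  -- Part 1
  have part1 : ∀ I : Set V, MaxIndepOn G (S \ T.verts) I → ∃ v ∈ I, v ∈ p.support := by
    intro I hI
    by_contra hcon
    push_neg at hcon
    have hs₀I : s₀ ∉ I := fun h => hcon s₀ h p.start_mem_support
    have hex : ∃ s₁ ∈ I, G.Adj s₀ s₁ := by
      by_contra hadj
      push_neg at hadj
      have hins : insert s₀ I ⊆ S \ T.verts := Set.insert_subset hs₀S hI.1
      have hsym : Symmetric (fun a b : V => ¬ G.Adj a b) := fun a b hab h => hab h.symm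
      have hindep : (insert s₀ I).Pairwise (fun a b => ¬ G.Adj a b) :=
        (by haveI : Std.Symm (fun a b : V => ¬ G.Adj a b) := ⟨fun a b h => hsym h⟩
            exact Set.pairwise_insert_of_symm.mpr ⟨hI.2.1, fun b hb _ => hadj b hb⟩)
      have hle : (insert s₀ I).ncard ≤ indepNumOn G (S \ T.verts) :=
        le_csSup (StmtAux.indep_bddAbove G (S \ T.verts))
          (Set.mem_setOf.mpr ⟨insert s₀ I, hins, hindep, rfl⟩)
      rw [Set.ncard_insert_of_notMem hs₀I I.toFinite, hI.2.2] at hle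
      omega
    obtain ⟨s₁, hs₁I, hadj⟩ := hex
    have hs₁p : s₁ ∉ p.support := hcon s₁ hs₁I
    have hq : (Walk.cons hadj.symm p).IsPath := hp.cons hs₁p
    have hlen := hmax s₁ u₀ (Walk.cons hadj.symm p) hq hu₀
      (by
        intro v hv hvT
        rw [Walk.support_cons, List.mem_cons] at hv
        rcases hv with rfl | hv
        · exact absurd hvT (hI.1 hs₁I).2
        · exact hint v hv hvT)
      ⟨I, hI, hs₁I⟩
    rw [Walk.length_cons] at hlen
    omega
  -- Part 2
  have hTsub : T.verts ⊆ (T ⊔ p.toSubgraph).verts := by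
    rw [Subgraph.verts_sup]; exact Set.subset_union_left
  have part2 : indepNumOn G (S \ (T ⊔ p.toSubgraph).verts) + 1 ≤ indepNumOn G (S \ T.verts) := by
    obtain ⟨J, hJ⟩ := StmtAux.exists_maxIndepOn G (S \ (T ⊔ p.toSubgraph).verts)
    have hJsub : J ⊆ S \ T.verts := fun v hv => ⟨(hJ.1 hv).1, fun hT' => (hJ.1 hv).2 (hTsub hT')⟩
    have hle : J.ncard ≤ indepNumOn G (S \ T.verts) :=
      le_csSup (StmtAux.indep_bddAbove _ _) ⟨J, hJsub, hJ.2.1, rfl⟩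
    rcases lt_or_eq_of_le hle with hlt | heq
    · rw [← hJ.2.2]; omega
    · exfalso
      obtain ⟨v, hvJ, hvp⟩ := part1 J ⟨hJsub, hJ.2.1, heq⟩
      refine (hJ.1 hvJ).2 ?_
      rw [Subgraph.verts_sup]
      exact Or.inr ((Walk.mem_verts_toSubgraph p).mpr hvp)
  -- Part 3
  have hconn : (T ⊔ p.toSubgraph).Connected :=
    Subgraph.connected_sup (SimpleGraph.Subgraph.connected_iff'.mpr hT.isConnected).preconnected
      p.toSubgraph_connected.preconnected
      ⟨u₀, hu₀, (Walk.mem_verts_toSubgraph p).mpr p.end_mem_support⟩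
  have hacyc : (T ⊔ p.toSubgraph).coe.IsAcyclic :=
    StmtAux.acyclic_of_nocyc _
      (StmtAux.nocyc_addPath (StmtAux.nocyc_of_acyclic hT.IsAcyclic) p hp hu₀ hint)
  have part3 : (T ⊔ p.toSubgraph).coe.IsTree := ⟨hconn.coe, hacyc⟩
  -- Part 4
  have hleaf_sub : ∀ v ∈ subLeaves (T ⊔ p.toSubgraph), v ∈ subLeaves T ∨ v = s₀ ∨ v = u₀ := by
    intro v hv
    obtain ⟨hvverts, hvdeg⟩ := hv
    by_cases hvp : v ∈ p.support
    · by_cases hvs : v = s₀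
      · exact Or.inr (Or.inl hvs)
      by_cases hvu : v = u₀
      · exact Or.inr (Or.inr hvu)
      exfalso
      obtain ⟨a, b, hab, ha, hb⟩ := StmtAux.interior_two_neighbors p hp hvp hvs hvu
      have h2 : 1 < ((T ⊔ p.toSubgraph).neighborSet v).ncard := by
        rw [Set.one_lt_ncard (Set.toFinite _)]
        exact ⟨a, Subgraph.sup_adj.mpr (Or.inr ha), b, Subgraph.sup_adj.mpr (Or.inr hb), hab⟩
      omega
    · left
      have hvT : v ∈ T.verts := by
        rw [Subgraph.verts_sup] at hvverts
        rcases hvverts with h1 | h1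
        · exact h1
        · exact absurd ((Walk.mem_verts_toSubgraph p).mp h1) hvp
      refine ⟨hvT, ?_⟩
      have hNeq : (T ⊔ p.toSubgraph).neighborSet v = T.neighborSet v := by
        rw [Subgraph.neighborSet_sup]
        have hemp : p.toSubgraph.neighborSet v = ∅ := by
          ext w
          simp only [Subgraph.mem_neighborSet, Set.mem_empty_iff_false, iff_false]
          intro hadj
          exact hvp ((Walk.mem_verts_toSubgraph p).mp hadj.fst_mem)
        rw [hemp, Set.union_empty]
      rw [← hNeq]
      exact hvdeg
  obtain ⟨y, hyadj⟩ := StmtAux.endpoint_neighbor p.reverse hs₀u₀.symm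
  rw [Walk.toSubgraph_reverse] at hyadj
  have hyp : y ∈ p.support := (Walk.mem_verts_toSubgraph p).mp hyadj.snd_mem
  have hyu : y ≠ u₀ := hyadj.adj_sub.ne'
  have hyT : y ∉ T.verts := fun hyT' => hyu (hint y hyp hyT')
  have part4 : (subLeaves (T ⊔ p.toSubgraph)).ncard ≤ t + 1 := by
    by_cases hTv : T.verts ⊆ {u₀}
    · have hsub2 : subLeaves (T ⊔ p.toSubgraph) ⊆ {s₀, u₀} := by
        intro v hv
        rcases hleaf_sub v hv with hvL | hv' | hv'
        · exact Or.inr (hTv hvL.1)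
        · exact Or.inl hv'
        · exact Or.inr hv'
      calc (subLeaves (T ⊔ p.toSubgraph)).ncard
          ≤ ({s₀, u₀} : Set V).ncard := Set.ncard_le_ncard hsub2 (Set.toFinite _)
        _ ≤ 2 := by
            refine le_trans (Set.ncard_insert_le _ _) ?_
            simp
        _ ≤ t + 1 := by omega
    · rw [Set.not_subset] at hTv
      obtain ⟨w, hwT, hwu⟩ := hTv
      rw [Set.mem_singleton_iff] at hwu
      obtain ⟨q⟩ := hT.isConnected.preconnected ⟨u₀, hu₀⟩ ⟨w, hwT⟩
      have hqnn : ¬ q.Nil := Walk.not_nil_of_ne (fun hh => hwu (congrArg Subtype.val hh).symm)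
      obtain ⟨z, hadj, -, -⟩ := Walk.not_nil_iff.mp hqnn
      have hzT : T.Adj u₀ ↑z := hadj
      have hu₀deg : 1 < ((T ⊔ p.toSubgraph).neighborSet u₀).ncard := by
        rw [Set.one_lt_ncard (Set.toFinite _)]
        refine ⟨↑z, Subgraph.sup_adj.mpr (Or.inl hzT), y, Subgraph.sup_adj.mpr (Or.inr hyadj), ?_⟩
        intro hzy
        exact hyT (hzy ▸ hzT.snd_mem)
      have hsub2 : subLeaves (T ⊔ p.toSubgraph) ⊆ insert s₀ (subLeaves T) := by
        intro v hv
        rcases hleaf_sub v hv with hvL | hv' | hv'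
        · exact Set.mem_insert_of_mem _ hvL
        · exact hv' ▸ Set.mem_insert _ _
        · exfalso
          have := hv.2
          rw [hv'] at this
          omega
      calc (subLeaves (T ⊔ p.toSubgraph)).ncard
          ≤ (insert s₀ (subLeaves T)).ncard := Set.ncard_le_ncard hsub2 (Set.toFinite _)
        _ ≤ (subLeaves T).ncard + 1 := Set.ncard_insert_le _ _
        _ ≤ t + 1 := by omega
  exact ⟨part1, part2, part3, part4⟩
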